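/- With the matrices T(r,s) indexed by α,β ∈ (1/k)ℤⁿ/ℤⁿ given by T(r,s)_{βα} = δ_{α−β,−[r/k]} e^{−2πi s·α} e^{−πi r·s/k} η_k(r,s), the Hilbert–Schmidt pairing tr(T(r,s) T(t,u)*) vanishes unless (r,s) ≡ (t,u) mod k, and when (r,s) ≡ (t,u) mod k it equals ± kⁿ η_k(r,s) η_k(t,u), with sign +1 when (r,s) = (t,u). -/

import Mathlib

open Matrix

/-- Coercion of an integer vector to a real vector. -/
def toR {n : ℕ} (v : Fin n → ℤ) : Fin n → ℝ := fun i => (v i : ℝ)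

/-- The coefficient `η_k(r,s) = exp(-(π/(2k))((s - Xr)·Y⁻¹(s - Xr) + r·Yr))`. -/
noncomputable def eta {n : ℕ} (X Y : Matrix (Fin n) (Fin n) ℝ)
    (k : ℕ) (r s : Fin n → ℤ) : ℝ :=
  Real.exp (-(Real.pi / (2 * k)) *
    ((toR s - X.mulVec (toR r)) ⬝ᵥ Y⁻¹.mulVec (toR s - X.mulVec (toR r)) +
      toR r ⬝ᵥ Y.mulVec (toR r)))

/-- The matrix of the Toeplitz operator of the pure phase `F_{r,s}` in the basis of theta
functions: `T(r,s)_{βα} = δ_{α-β,-[r/k]} e^{-2πi s·α} e^{-πi r·s/k} η_k(r,s)`, with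
residues `α, β ∈ (1/k)ℤⁿ/ℤⁿ` represented by `Fin n → Fin k`. -/
noncomputable def Tmat {n : ℕ} (X Y : Matrix (Fin n) (Fin n) ℝ) (k : ℕ)
    (r s : Fin n → ℤ) : Matrix (Fin n → Fin k) (Fin n → Fin k) ℂ :=
  Matrix.of fun β α =>
    (if ∀ i, (k : ℤ) ∣ (((α i : ℕ) : ℤ) - ((β i : ℕ) : ℤ) + r i) then 1 else 0) *
      Complex.exp ((-2 * Real.pi * Complex.I) *
        ((∑ i, (s i : ℝ) * (((α i : ℕ) : ℝ) / k) : ℝ) : ℂ)) *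
      Complex.exp ((-Real.pi * Complex.I) *
        (((∑ i, (r i : ℝ) * (s i : ℝ)) / k : ℝ) : ℂ)) * (eta X Y k r s : ℂ)

lemma aux_entry (x1 x2 y1 y2 e1 e2 : ℝ) (d1 d2 : ℂ) (hd2 : (starRingEnd ℂ) d2 = d2) :
    (d1 * Complex.exp ((-2 * Real.pi * Complex.I) * (x1:ℂ)) *
      Complex.exp ((-Real.pi * Complex.I) * (y1:ℂ)) * (e1:ℂ)) *
    (starRingEnd ℂ) (d2 * Complex.exp ((-2 * Real.pi * Complex.I) * (x2:ℂ)) *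
      Complex.exp ((-Real.pi * Complex.I) * (y2:ℂ)) * (e2:ℂ)) =
    d1 * d2 * Complex.exp ((-2 * Real.pi * Complex.I) * ((x1 - x2 : ℝ):ℂ)) *
      Complex.exp ((-Real.pi * Complex.I) * ((y1 - y2 : ℝ):ℂ)) * ((e1 * e2 : ℝ):ℂ) := by
  have h1 : Complex.exp ((-2 * Real.pi * Complex.I) * ((x1 - x2 : ℝ):ℂ)) =
      Complex.exp ((-2 * Real.pi * Complex.I) * (x1:ℂ)) *
      Complex.exp ((2 * Real.pi * Complex.I) * (x2:ℂ)) := by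
    rw [← Complex.exp_add]; congr 1; push_cast; ring
  have h2 : Complex.exp ((-Real.pi * Complex.I) * ((y1 - y2 : ℝ):ℂ)) =
      Complex.exp ((-Real.pi * Complex.I) * (y1:ℂ)) *
      Complex.exp ((Real.pi * Complex.I) * (y2:ℂ)) := by
    rw [← Complex.exp_add]; congr 1; push_cast; ring
  have c1 : (starRingEnd ℂ) (Complex.exp ((-2 * Real.pi * Complex.I) * (x2:ℂ))) =
      Complex.exp ((2 * Real.pi * Complex.I) * (x2:ℂ)) := by
    rw [← Complex.exp_conj]; congr 1
    simp only [_root_.map_mul, map_neg, map_ofNat, Complex.conj_I, Complex.conj_ofReal]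
    ring
  have c2 : (starRingEnd ℂ) (Complex.exp ((-Real.pi * Complex.I) * (y2:ℂ))) =
      Complex.exp ((Real.pi * Complex.I) * (y2:ℂ)) := by
    rw [← Complex.exp_conj]; congr 1
    simp only [_root_.map_mul, map_neg, Complex.conj_I, Complex.conj_ofReal]
    ring
  rw [h1, h2]
  simp only [_root_.map_mul, hd2, c1, c2, Complex.conj_ofReal]
  push_cast
  ring

def Bmap {n : ℕ} (k : ℕ) (hk : 0 < k) (r : Fin n → ℤ) (α : Fin n → Fin k) : Fin n → Fin k :=
  fun i => ⟨((((α i : ℕ) : ℤ) + r i) % k).toNat, by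
    have h0 : (0:ℤ) < k := by exact_mod_cast hk
    have h1 := Int.emod_nonneg (((α i : ℕ) : ℤ) + r i) h0.ne'
    have h2 := Int.emod_lt_of_pos (((α i : ℕ) : ℤ) + r i) h0
    omega⟩

lemma dvd_iff_eq_Bmap {n : ℕ} {k : ℕ} (hk : 0 < k) (r : Fin n → ℤ) (α β : Fin n → Fin k) :
    (∀ i, (k:ℤ) ∣ (((α i : ℕ) : ℤ) - ((β i : ℕ) : ℤ) + r i)) ↔ β = Bmap k hk r α := by
  rw [funext_iff]
  apply forall_congr'
  intro i
  have h0 : (0:ℤ) < k := by exact_mod_cast hk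
  set a : ℤ := ((α i : ℕ) : ℤ)
  set b : ℤ := ((β i : ℕ) : ℤ)
  have hb1 : 0 ≤ b := Int.natCast_nonneg _
  have hb2 : b < (k:ℤ) := by unfold b; exact_mod_cast (β i).isLt
  have h1 := Int.emod_nonneg (a + r i) h0.ne'
  have h2 := Int.emod_lt_of_pos (a + r i) h0
  have h3 := Int.mul_ediv_add_emod (a + r i) k
  constructor
  · rintro ⟨c, hc⟩
    have hbe : (a + r i) % k = b := by
      have hx : a + r i = b + (k:ℤ) * c := by linarith [hc]
      rw [hx, Int.add_mul_emod_self_left]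
      exact Int.emod_eq_of_lt hb1 hb2
    apply Fin.ext
    show (β i : ℕ) = (((a + r i) % k).toNat)
    omega
  · intro hbeq
    have hbv : b = (a + r i) % k := by
      have hx : (β i : ℕ) = (((a + r i) % k).toNat) := congrArg Fin.val hbeq
      omega
    exact ⟨(a + r i) / k, by omega⟩

/-- the Hilbert–Schmidt pairing `tr(T(r,s) T(t,u)*)` vanishes unless
`(r,s) ≡ (t,u) mod k`, and when `(r,s) ≡ (t,u) mod k` it equals
`± kⁿ η_k(r,s) η_k(t,u)`, with sign `+1` when `(r,s) = (t,u)`. -/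
theorem statement14 {n : ℕ} (X Y : Matrix (Fin n) (Fin n) ℝ)
    (hX : Xᵀ = X) (hY : Y.PosDef) (k : ℕ) (hk : 0 < k) (r s t u : Fin n → ℤ) :
    (¬((∀ i, (k : ℤ) ∣ (r i - t i)) ∧ (∀ i, (k : ℤ) ∣ (s i - u i))) →
      (Tmat X Y k r s * (Tmat X Y k t u)ᴴ).trace = 0) ∧
    (((∀ i, (k : ℤ) ∣ (r i - t i)) ∧ (∀ i, (k : ℤ) ∣ (s i - u i))) →
      ∃ ε : ℝ, (ε = 1 ∨ ε = -1) ∧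
        (Tmat X Y k r s * (Tmat X Y k t u)ᴴ).trace =
          ((ε * k ^ n * eta X Y k r s * eta X Y k t u : ℝ) : ℂ) ∧
        ((r = t ∧ s = u) → ε = 1)) := by
  have hkR : ((k:ℝ)) ≠ 0 := by positivity
  have hkC : ((k:ℂ)) ≠ 0 := by exact_mod_cast (by positivity : ((k:ℝ)) ≠ 0)
  -- trace expansion
  have htr : (Tmat X Y k r s * (Tmat X Y k t u)ᴴ).trace =
      ∑ β : Fin n → Fin k, ∑ α : Fin n → Fin k,
        (if ∀ i, (k : ℤ) ∣ (((α i : ℕ) : ℤ) - ((β i : ℕ) : ℤ) + r i) then (1:ℂ) else 0) *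
        (if ∀ i, (k : ℤ) ∣ (((α i : ℕ) : ℤ) - ((β i : ℕ) : ℤ) + t i) then (1:ℂ) else 0) *
        Complex.exp ((-2 * Real.pi * Complex.I) *
          (((∑ i, (s i : ℝ) * (((α i : ℕ) : ℝ) / k)) -
            (∑ i, (u i : ℝ) * (((α i : ℕ) : ℝ) / k)) : ℝ) : ℂ)) *
        Complex.exp ((-Real.pi * Complex.I) *
          (((∑ i, (r i : ℝ) * (s i : ℝ)) / k - (∑ i, (t i : ℝ) * (u i : ℝ)) / k : ℝ) : ℂ)) *
        ((eta X Y k r s * eta X Y k t u : ℝ) : ℂ) := by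
    rw [Matrix.trace]
    simp only [Matrix.diag_apply, Matrix.mul_apply, Matrix.conjTranspose_apply, Tmat,
      Matrix.of_apply, Complex.star_def]
    refine Finset.sum_congr rfl fun β _ => Finset.sum_congr rfl fun α _ => ?_
    exact aux_entry _ _ _ _ _ _ _ _ (by split <;> simp)
  -- key reduction assuming r ≡ t (mod k)
  have key : (∀ i, (k:ℤ) ∣ (r i - t i)) →
      (Tmat X Y k r s * (Tmat X Y k t u)ᴴ).trace =
      (∏ i : Fin n, ∑ a : Fin k, Complex.exp ((-2 * Real.pi * Complex.I) *
          ((((s i : ℝ) - (u i : ℝ)) * (((a : ℕ) : ℝ) / k) : ℝ) : ℂ))) *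
      (Complex.exp ((-Real.pi * Complex.I) *
          (((∑ i, (r i : ℝ) * (s i : ℝ)) / k - (∑ i, (t i : ℝ) * (u i : ℝ)) / k : ℝ) : ℂ)) *
        ((eta X Y k r s * eta X Y k t u : ℝ) : ℂ)) := by
    intro hrt
    have hcond : ∀ (β α : Fin n → Fin k),
        (∀ i, (k:ℤ) ∣ (((α i : ℕ) : ℤ) - ((β i : ℕ) : ℤ) + t i)) ↔
        (∀ i, (k:ℤ) ∣ (((α i : ℕ) : ℤ) - ((β i : ℕ) : ℤ) + r i)) := by
      intro β α
      apply forall_congr'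
      intro i
      constructor
      · intro h
        have h2 := dvd_add h (hrt i)
        rwa [show ((α i : ℕ) : ℤ) - ((β i : ℕ) : ℤ) + t i + (r i - t i) =
          ((α i : ℕ) : ℤ) - ((β i : ℕ) : ℤ) + r i from by ring] at h2
      · intro h
        have h2 := dvd_sub h (hrt i)
        rwa [show ((α i : ℕ) : ℤ) - ((β i : ℕ) : ℤ) + r i - (r i - t i) =
          ((α i : ℕ) : ℤ) - ((β i : ℕ) : ℤ) + t i from by ring] at h2
    rw [htr, Finset.sum_comm]
    have step1 : ∀ α : Fin n → Fin k,
        (∑ β : Fin n → Fin k,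
          (if ∀ i, (k : ℤ) ∣ (((α i : ℕ) : ℤ) - ((β i : ℕ) : ℤ) + r i) then (1:ℂ) else 0) *
          (if ∀ i, (k : ℤ) ∣ (((α i : ℕ) : ℤ) - ((β i : ℕ) : ℤ) + t i) then (1:ℂ) else 0) *
          Complex.exp ((-2 * Real.pi * Complex.I) *
            (((∑ i, (s i : ℝ) * (((α i : ℕ) : ℝ) / k)) -
              (∑ i, (u i : ℝ) * (((α i : ℕ) : ℝ) / k)) : ℝ) : ℂ)) *
          Complex.exp ((-Real.pi * Complex.I) *
            (((∑ i, (r i : ℝ) * (s i : ℝ)) / k - (∑ i, (t i : ℝ) * (u i : ℝ)) / k : ℝ) : ℂ)) *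
          ((eta X Y k r s * eta X Y k t u : ℝ) : ℂ)) =
        Complex.exp ((-2 * Real.pi * Complex.I) *
            (((∑ i, (s i : ℝ) * (((α i : ℕ) : ℝ) / k)) -
              (∑ i, (u i : ℝ) * (((α i : ℕ) : ℝ) / k)) : ℝ) : ℂ)) *
          (Complex.exp ((-Real.pi * Complex.I) *
            (((∑ i, (r i : ℝ) * (s i : ℝ)) / k - (∑ i, (t i : ℝ) * (u i : ℝ)) / k : ℝ) : ℂ)) *
          ((eta X Y k r s * eta X Y k t u : ℝ) : ℂ)) := by
      intro α
      have hrw : ∀ β : Fin n → Fin k,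
          (if ∀ i, (k : ℤ) ∣ (((α i : ℕ) : ℤ) - ((β i : ℕ) : ℤ) + r i) then (1:ℂ) else 0) *
          (if ∀ i, (k : ℤ) ∣ (((α i : ℕ) : ℤ) - ((β i : ℕ) : ℤ) + t i) then (1:ℂ) else 0) *
          Complex.exp ((-2 * Real.pi * Complex.I) *
            (((∑ i, (s i : ℝ) * (((α i : ℕ) : ℝ) / k)) -
              (∑ i, (u i : ℝ) * (((α i : ℕ) : ℝ) / k)) : ℝ) : ℂ)) *
          Complex.exp ((-Real.pi * Complex.I) *
            (((∑ i, (r i : ℝ) * (s i : ℝ)) / k - (∑ i, (t i : ℝ) * (u i : ℝ)) / k : ℝ) : ℂ)) *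
          ((eta X Y k r s * eta X Y k t u : ℝ) : ℂ) =
          (if β = Bmap k hk r α then
            Complex.exp ((-2 * Real.pi * Complex.I) *
              (((∑ i, (s i : ℝ) * (((α i : ℕ) : ℝ) / k)) -
                (∑ i, (u i : ℝ) * (((α i : ℕ) : ℝ) / k)) : ℝ) : ℂ)) *
            (Complex.exp ((-Real.pi * Complex.I) *
              (((∑ i, (r i : ℝ) * (s i : ℝ)) / k - (∑ i, (t i : ℝ) * (u i : ℝ)) / k : ℝ) : ℂ)) *
            ((eta X Y k r s * eta X Y k t u : ℝ) : ℂ))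
          else 0) := by
        intro β
        simp only [hcond β α, dvd_iff_eq_Bmap hk r α β]
        by_cases hb : β = Bmap k hk r α
        · simp only [hb, eq_self_iff_true, if_true]; ring
        · simp [hb]
      rw [Finset.sum_congr rfl fun β _ => hrw β]
      simp
    rw [Finset.sum_congr rfl fun α _ => step1 α]
    rw [← Finset.sum_mul]
    congr 1
    have step2 : ∀ α : Fin n → Fin k,
        Complex.exp ((-2 * Real.pi * Complex.I) *
            (((∑ i, (s i : ℝ) * (((α i : ℕ) : ℝ) / k)) -
              (∑ i, (u i : ℝ) * (((α i : ℕ) : ℝ) / k)) : ℝ) : ℂ)) =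
        ∏ i : Fin n, Complex.exp ((-2 * Real.pi * Complex.I) *
            ((((s i : ℝ) - (u i : ℝ)) * (((α i : ℕ) : ℝ) / k) : ℝ) : ℂ)) := by
      intro α
      rw [← Complex.exp_sum]
      congr 1
      push_cast
      rw [← Finset.sum_sub_distrib, Finset.mul_sum]
      exact Finset.sum_congr rfl fun i _ => by ring
    rw [Finset.sum_congr rfl fun α _ => step2 α]
    rw [Finset.prod_univ_sum]
    simp
  constructor
  · -- vanishing part
    intro hnot
    by_cases hrt : ∀ i, (k:ℤ) ∣ (r i - t i)
    · have hsu : ¬ ∀ i, (k:ℤ) ∣ (s i - u i) := fun h => hnot ⟨hrt, h⟩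
      push_neg at hsu
      obtain ⟨i0, hi0⟩ := hsu
      rw [key hrt]
      have hzero : (∑ a : Fin k, Complex.exp ((-2 * Real.pi * Complex.I) *
          ((((s i0 : ℝ) - (u i0 : ℝ)) * (((a : ℕ) : ℝ) / k) : ℝ) : ℂ))) = 0 := by
        set ζ : ℂ := Complex.exp ((-2 * Real.pi * Complex.I) *
          ((((s i0 : ℝ) - (u i0 : ℝ)) / k : ℝ) : ℂ)) with hζ
        have hterm : ∀ a : Fin k, Complex.exp ((-2 * Real.pi * Complex.I) *
            ((((s i0 : ℝ) - (u i0 : ℝ)) * (((a : ℕ) : ℝ) / k) : ℝ) : ℂ)) = ζ ^ (a : ℕ) := by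
          intro a
          rw [hζ, ← Complex.exp_nat_mul]
          congr 1
          push_cast
          ring
        have hζk : ζ ^ k = 1 := by
          rw [hζ, ← Complex.exp_nat_mul]
          have harg : (k:ℂ) * ((-2 * Real.pi * Complex.I) *
              ((((s i0 : ℝ) - (u i0 : ℝ)) / k : ℝ) : ℂ)) =
              ((-(s i0 - u i0) : ℤ) : ℂ) * (2 * Real.pi * Complex.I) := by
            push_cast
            field_simp
          rw [harg]
          exact Complex.exp_int_mul_two_pi_mul_I _
        have hζ1 : ζ ≠ 1 := by
          intro h
          rw [hζ, Complex.exp_eq_one_iff] at h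
          obtain ⟨m, hm⟩ := h
          have hpi : ((2:ℂ) * Real.pi * Complex.I) ≠ 0 := by
            simp [Real.pi_ne_zero, Complex.I_ne_zero]
          have hx : ((-(((s i0 : ℝ) - (u i0 : ℝ)) / k) : ℝ) : ℂ) = (m:ℂ) := by
            apply mul_right_cancel₀ hpi
            push_cast
            push_cast at hm
            linear_combination hm
          have hx2 : (-(((s i0 : ℝ) - (u i0 : ℝ)) / k) : ℝ) = (m:ℝ) := by
            exact_mod_cast hx
          have hx3 : ((s i0 : ℝ) - (u i0 : ℝ)) = (-m : ℝ) * k := by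
            field_simp at hx2
            linarith
          have hx4 : (s i0 - u i0 : ℤ) = (-m) * k := by exact_mod_cast hx3
          exact hi0 ⟨-m, by linarith [hx4]⟩
        rw [Finset.sum_congr rfl fun a _ => hterm a, Fin.sum_univ_eq_sum_range (fun j => ζ ^ j) k,
          geom_sum_eq hζ1, hζk]
        simp
      rw [Finset.prod_eq_zero (Finset.mem_univ i0) hzero, zero_mul]
    · push_neg at hrt
      obtain ⟨i0, hi0⟩ := hrt
      rw [htr]
      refine Finset.sum_eq_zero fun β _ => Finset.sum_eq_zero fun α _ => ?_
      by_cases h1 : ∀ i, (k : ℤ) ∣ (((α i : ℕ) : ℤ) - ((β i : ℕ) : ℤ) + r i)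
      · by_cases h2 : ∀ i, (k : ℤ) ∣ (((α i : ℕ) : ℤ) - ((β i : ℕ) : ℤ) + t i)
        · exfalso
          apply hi0
          have hd := dvd_sub (h1 i0) (h2 i0)
          rwa [show ((α i0 : ℕ) : ℤ) - ((β i0 : ℕ) : ℤ) + r i0 -
            (((α i0 : ℕ) : ℤ) - ((β i0 : ℕ) : ℤ) + t i0) = r i0 - t i0 from by ring] at hd
        · simp [h2]
      · simp [h1]
  · -- congruent part
    rintro ⟨hrt, hsu⟩
    have hdM : (k:ℤ) ∣ ((∑ i, r i * s i) - ∑ i, t i * u i) := by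
      rw [← Finset.sum_sub_distrib]
      rw [show (∑ i, (r i * s i - t i * u i)) =
        ∑ i, ((r i - t i) * s i + t i * (s i - u i)) from
        Finset.sum_congr rfl fun i _ => by ring]
      exact Finset.dvd_sum fun i _ => dvd_add ((hrt i).mul_right _) ((hsu i).mul_left _)
    obtain ⟨m', hm'⟩ := hdM
    refine ⟨if Even m' then 1 else -1, by split <;> simp, ?_, ?_⟩
    · rw [key hrt]
      have hfac : ∀ i : Fin n, (∑ a : Fin k, Complex.exp ((-2 * Real.pi * Complex.I) *
          ((((s i : ℝ) - (u i : ℝ)) * (((a : ℕ) : ℝ) / k) : ℝ) : ℂ))) = (k:ℂ) := by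
        intro i
        obtain ⟨c, hc⟩ := hsu i
        have hone : ∀ a : Fin k, Complex.exp ((-2 * Real.pi * Complex.I) *
            ((((s i : ℝ) - (u i : ℝ)) * (((a : ℕ) : ℝ) / k) : ℝ) : ℂ)) = 1 := by
          intro a
          have hcr : ((s i : ℂ) - (u i : ℂ)) = (k:ℂ) * (c:ℂ) := by exact_mod_cast hc
          have harg : ((-2 : ℂ) * Real.pi * Complex.I) *
              ((((s i : ℝ) - (u i : ℝ)) * (((a : ℕ) : ℝ) / k) : ℝ) : ℂ) =
              ((-(c * (a:ℕ)) : ℤ) : ℂ) * (2 * Real.pi * Complex.I) := by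
            push_cast
            rw [hcr]
            field_simp
          rw [harg]
          exact Complex.exp_int_mul_two_pi_mul_I _
        rw [Finset.sum_congr rfl fun a _ => hone a]
        simp
      rw [Finset.prod_congr rfl fun i _ => hfac i, Finset.prod_const, Finset.card_univ,
        Fintype.card_fin]
      have hMr : (∑ i, (r i:ℝ) * (s i:ℝ)) - ∑ i, (t i:ℝ) * (u i:ℝ) = (k:ℝ) * (m':ℝ) := by
        have h := congrArg (fun z : ℤ => (z:ℝ)) hm'
        push_cast at h
        linarith [h]
      have hy : ((∑ i, (r i : ℝ) * (s i : ℝ)) / k - (∑ i, (t i : ℝ) * (u i : ℝ)) / k : ℝ)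
          = (m' : ℝ) := by
        field_simp
        linarith [hMr]
      rw [hy]
      have hexp : Complex.exp ((-(Real.pi:ℂ) * Complex.I) * ((m' : ℝ) : ℂ)) =
          (((if Even m' then (1:ℝ) else -1) : ℝ) : ℂ) := by
        rw [show (-(Real.pi:ℂ) * Complex.I) * ((m' : ℝ) : ℂ) =
          ((-m' : ℤ) : ℂ) * ((Real.pi : ℂ) * Complex.I) from by push_cast; ring]
        rw [Complex.exp_int_mul]
        rw [show Complex.exp ((Real.pi : ℂ) * Complex.I) = -1 from ?_]
        · rcases Int.even_or_odd m' with he | ho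
          · rw [if_pos he, (he.neg).neg_one_zpow]
            simp
          · rw [if_neg (Int.not_even_iff_odd.mpr ho), (ho.neg).neg_one_zpow]
            simp
        · exact Complex.exp_pi_mul_I
      rw [hexp]
      push_cast
      ring
    · rintro ⟨hr, hs⟩
      subst hr
      subst hs
      have h0 : (k:ℤ) * m' = 0 := by linarith [hm']
      have hm0 : m' = 0 := by
        rcases mul_eq_zero.mp h0 with h | h
        · exact absurd h (by exact_mod_cast hk.ne')
        · exact h
      simp [hm0]
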